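/- Define points x_{k,j} = (r sin φ_k cos θ_{k,j}, r sin φ_k sin θ_{k,j}, r cos φ_k) with φ_k = π/2 + πk/(2n) for k = −n,...,n and θ_{k,j} = 2πj/(n sin φ_k) for j = 1,...,⌊n sin φ_k⌋. Then any two distinct points x_{k,i}, x_{m,j} in this family satisfy ‖x_{k,i} − x_{m,j}‖ ≥ r/n. -/

import Mathlib

open Real

noncomputable def vec3 (a b c : ℝ) : EuclideanSpace ℝ (Fin 3) :=
  (WithLp.equiv 2 (Fin 3 → ℝ)).symm ![a, b, c]

lemma sqnorm_vec3_sub (a b c a' b' c' : ℝ) :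
    ‖vec3 a b c - vec3 a' b' c'‖^2 = (a-a')^2 + (b-b')^2 + (c-c')^2 := by
  have h : vec3 a b c - vec3 a' b' c' = vec3 (a-a') (b-b') (c-c') := by
    simp only [vec3, WithLp.equiv_symm_apply, ← WithLp.toLp_sub]
    congr 1
    ext i
    fin_cases i <;> simp
  rw [h, vec3, EuclideanSpace.norm_eq, Real.sq_sqrt (by positivity)]
  simp [Fin.sum_univ_three, sq_abs]

lemma sin_lb_mid {S d : ℝ} (hS : 0 < S) (hd1 : 1 ≤ d) (hdS : d ≤ S - 1) :
    2 / S ≤ Real.sin (π * d / S) := by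
  have hπ := Real.pi_pos
  set t := π * d / S with ht
  have ht0 : 0 ≤ t := by positivity
  have htπ : t ≤ π := by
    rw [ht, div_le_iff₀ hS]; nlinarith
  rcases le_or_gt t (π/2) with h | h
  · have hj := Real.mul_le_sin ht0 h
    have heq : 2 / π * t = 2 * d / S := by rw [ht]; field_simp
    have h2 : 2 / S ≤ 2 * d / S := by gcongr; linarith
    linarith
  · rw [← Real.sin_pi_sub]
    have h1 : 0 ≤ π - t := by linarith
    have h2 : π - t ≤ π / 2 := by linarith
    have hj := Real.mul_le_sin h1 h2
    have heq : π - t = π * (S - d) / S := by rw [ht]; field_simp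
    have hptS : π / S ≤ π - t := by
      rw [heq]; gcongr; nlinarith
    have heq2 : 2 / π * (π / S) = 2 / S := by field_simp
    have : 2 / S ≤ 2 / π * (π - t) := by
      rw [← heq2]; gcongr
    linarith

lemma sin_lb_small {N e : ℝ} (hN : 0 < N) (he1 : 1 ≤ e) (heN : e ≤ 2 * N) :
    1 / (2 * N) ≤ Real.sin (π * e / (4 * N)) := by
  have hπ := Real.pi_pos
  have h0 : 0 ≤ π * e / (4 * N) := by positivity
  have h2 : π * e / (4 * N) ≤ π / 2 := by
    rw [div_le_div_iff₀ (by positivity) (by norm_num)]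
    nlinarith
  have hj := Real.mul_le_sin h0 h2
  have heq : 2 / π * (π * e / (4 * N)) = e / (2 * N) := by field_simp; ring
  have : 1 / (2 * N) ≤ e / (2 * N) := by gcongr
  linarith

lemma chord_sq (r sk ck sm cm a b : ℝ) (hk : sk^2 + ck^2 = 1) (hm : sm^2 + cm^2 = 1) :
    (r*sk*Real.cos a - r*sm*Real.cos b)^2 + (r*sk*Real.sin a - r*sm*Real.sin b)^2
      + (r*ck - r*cm)^2
    = 2*r^2 - 2*r^2*(sk*sm*Real.cos (a-b) + ck*cm) := by
  have h := Real.cos_sub a b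
  have pa := Real.sin_sq_add_cos_sq a
  have pb := Real.sin_sq_add_cos_sq b
  linear_combination (r^2*sk^2)*pa + (r^2*sm^2)*pb + r^2*hk + r^2*hm + 2*r^2*sk*sm*h

lemma cos_double_eq (y : ℝ) : Real.cos (2*y) = 1 - 2 * Real.sin y ^ 2 := by
  have h := Real.sin_sq_add_cos_sq y
  rw [Real.cos_two_mul]; linarith

/-- The approximately equally spaced points
`x_{k,j} = (r sin φ_k cos θ_{k,j}, r sin φ_k sin θ_{k,j}, r cos φ_k)` with
`φ_k = π/2 + πk/(2n)` for `−n ≤ k ≤ n` and `θ_{k,j} = 2πj/(n sin φ_k)` for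
`1 ≤ j ≤ ⌊n sin φ_k⌋` are `r/n`-separated: any two distinct points of the
family lie at distance at least `r/n`. -/
theorem stmt16 (r : ℝ) (hr : 0 < r) (n : ℕ) (hn : 1 ≤ n)
    (φ : ℤ → ℝ) (hφ : φ = fun (k : ℤ) => π / 2 + π * (k : ℝ) / (2 * n))
    (θ : ℤ → ℕ → ℝ) (hθ : θ = fun (k : ℤ) (j : ℕ) => 2 * π * (j : ℝ) / (n * Real.sin (φ k)))
    (x : ℤ → ℕ → EuclideanSpace ℝ (Fin 3))
    (hx : x = fun (k : ℤ) (j : ℕ) => vec3 (r * Real.sin (φ k) * Real.cos (θ k j))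
      (r * Real.sin (φ k) * Real.sin (θ k j)) (r * Real.cos (φ k))) :
    ∀ k m : ℤ, ∀ i j : ℕ,
      -(n : ℤ) ≤ k → k ≤ n → -(n : ℤ) ≤ m → m ≤ n →
      1 ≤ i → (i : ℝ) ≤ n * Real.sin (φ k) →
      1 ≤ j → (j : ℝ) ≤ n * Real.sin (φ m) →
      (k, i) ≠ (m, j) →
      r / n ≤ ‖x k i - x m j‖ := by
  intro k m i j hk1 hk2 hm1 hm2 hi1 hi2 hj1 hj2 hne
  have hn' : (1:ℝ) ≤ (n:ℝ) := by exact_mod_cast hn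
  have hn0 : (0:ℝ) < n := by linarith
  have hπ := Real.pi_pos
  have hi1' : (1:ℝ) ≤ (i:ℝ) := by exact_mod_cast hi1
  have hj1' : (1:ℝ) ≤ (j:ℝ) := by exact_mod_cast hj1
  have hsk : 1/(n:ℝ) ≤ Real.sin (φ k) := by
    rw [div_le_iff₀ hn0]; nlinarith
  have hsm : 1/(n:ℝ) ≤ Real.sin (φ m) := by
    rw [div_le_iff₀ hn0]; nlinarith
  have hsk0 : 0 < Real.sin (φ k) := lt_of_lt_of_le (by positivity) hsk
  have hsm0 : 0 < Real.sin (φ m) := lt_of_lt_of_le (by positivity) hsm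
  simp only [hx]
  set X := vec3 (r * Real.sin (φ k) * Real.cos (θ k i))
      (r * Real.sin (φ k) * Real.sin (θ k i)) (r * Real.cos (φ k)) -
    vec3 (r * Real.sin (φ m) * Real.cos (θ m j))
      (r * Real.sin (φ m) * Real.sin (θ m j)) (r * Real.cos (φ m)) with hX
  have hnorm : ‖X‖^2 = 2*r^2 - 2*r^2*(Real.sin (φ k) * Real.sin (φ m)
      * Real.cos (θ k i - θ m j) + Real.cos (φ k) * Real.cos (φ m)) := by
    rw [hX, sqnorm_vec3_sub]
    exact chord_sq r _ _ _ _ _ _ (Real.sin_sq_add_cos_sq (φ k)) (Real.sin_sq_add_cos_sq (φ m))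
  suffices hkey : (r/n)^2 ≤ ‖X‖^2 by
    have h1 : (0:ℝ) ≤ r/(n:ℝ) := by positivity
    nlinarith [norm_nonneg X]
  rcases eq_or_ne k m with rfl | hkm
  · -- same latitude
    have hij : i ≠ j := fun h => hne (by rw [h])
    set s := Real.sin (φ k) with hs
    set S := (n:ℝ) * s with hSdef
    have hS0 : (0:ℝ) < S := by positivity
    set δ := (i:ℝ) - (j:ℝ) with hδ
    set d := |δ| with hd
    have hd1 : 1 ≤ d := by
      rcases hij.lt_or_gt with h | h
      · have : (i:ℝ) + 1 ≤ j := by exact_mod_cast Nat.succ_le_of_lt h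
        rw [hd, abs_of_nonpos (by rw [hδ]; linarith)]; rw [hδ]; linarith
      · have : (j:ℝ) + 1 ≤ i := by exact_mod_cast Nat.succ_le_of_lt h
        rw [hd, abs_of_nonneg (by rw [hδ]; linarith)]; rw [hδ]; linarith
    have hdS : d ≤ S - 1 := by
      rw [hd, hδ, abs_le]; constructor <;> linarith
    have hθd : θ k i - θ k j = 2 * (π * δ / S) := by
      rw [hθ]; simp only; rw [hδ, hSdef, hs]; ring
    have hsq : Real.sin (π * δ / S)^2 = Real.sin (π * d / S)^2 := by
      rcases abs_cases δ with ⟨h, _⟩ | ⟨h, _⟩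
      · rw [hd, h]
      · rw [hd, h, show π * -δ / S = -(π * δ / S) by ring, Real.sin_neg]; ring
    have hE : ‖X‖^2 = 4*r^2*s^2*Real.sin (π * d / S)^2 := by
      rw [hnorm, hθd, cos_double_eq, hsq]
      have pyth := Real.sin_sq_add_cos_sq (φ k)
      linear_combination (-2*r^2) * pyth
    have hlb := sin_lb_mid hS0 hd1 hdS
    have hlb2 : (2/S)^2 ≤ Real.sin (π * d / S)^2 := by
      apply pow_le_pow_left₀ (by positivity) hlb
    have hfin : r^2*s^2*(2/S)^2 = 4*(r/n)^2 := by
      rw [hSdef]; field_simp; ring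
    have Hmul := mul_le_mul_of_nonneg_left hlb2 (by positivity : (0:ℝ) ≤ r^2*s^2)
    have hq := sq_nonneg (r/(n:ℝ))
    linarith
  · -- different latitudes
    set e := |(k:ℝ) - (m:ℝ)| with he
    have he1 : 1 ≤ e := by
      rcases hkm.lt_or_gt with h | h
      · have : (k:ℝ) + 1 ≤ m := by exact_mod_cast Int.add_one_le_of_lt h
        rw [he, abs_of_nonpos (by linarith)]; linarith
      · have : (m:ℝ) + 1 ≤ k := by exact_mod_cast Int.add_one_le_of_lt h
        rw [he, abs_of_nonneg (by linarith)]; linarith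
    have hkr : (k:ℝ) ≤ n := by exact_mod_cast hk2
    have hkl : -(n:ℝ) ≤ k := by exact_mod_cast hk1
    have hmr : (m:ℝ) ≤ n := by exact_mod_cast hm2
    have hml : -(n:ℝ) ≤ m := by exact_mod_cast hm1
    have heN : e ≤ 2 * n := by
      rw [he, abs_le]; constructor <;> linarith
    have hφd : φ k - φ m = 2 * (π * ((k:ℝ) - m) / (4*n)) := by
      rw [hφ]; simp only; ring
    have hsq : Real.sin (π * ((k:ℝ)-m) / (4*n))^2 = Real.sin (π * e / (4*n))^2 := by
      rcases abs_cases ((k:ℝ) - m) with ⟨h, _⟩ | ⟨h, _⟩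
      · rw [he, h]
      · rw [he, h, show π * -((k:ℝ)-m) / (4*n) = -(π * ((k:ℝ)-m) / (4*n)) by ring,
          Real.sin_neg]; ring
    have hcosφ : Real.cos (φ k) * Real.cos (φ m) + Real.sin (φ k) * Real.sin (φ m)
        = 1 - 2 * Real.sin (π * e / (4*n))^2 := by
      rw [← Real.cos_sub, hφd, cos_double_eq, hsq]
    have hlb := sin_lb_small hn0 he1 heN
    have hlb2 : (1/(2*(n:ℝ)))^2 ≤ Real.sin (π * e / (4*n))^2 := by
      apply pow_le_pow_left₀ (by positivity) hlb
    have hA : 0 ≤ r^2 * (Real.sin (φ k) * Real.sin (φ m) * (1 - Real.cos (θ k i - θ m j))) := by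
      have h1 := Real.cos_le_one (θ k i - θ m j)
      exact mul_nonneg (sq_nonneg r)
        (mul_nonneg (mul_nonneg hsk0.le hsm0.le) (by linarith))
    have hcosφ' : r^2 * (Real.cos (φ k) * Real.cos (φ m))
        = r^2 * (1 - 2 * Real.sin (π * e / (4*n))^2 - Real.sin (φ k) * Real.sin (φ m)) := by
      linear_combination r^2 * hcosφ
    have hfin : 4 * (r^2 * (1/(2*(n:ℝ)))^2) = (r/n)^2 := by
      field_simp; ring
    have Hmul := mul_le_mul_of_nonneg_left hlb2 (sq_nonneg r)
    linarith [hA, hcosφ', hfin, Hmul, hnorm]
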